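/- Let M be a binary matroid, T ⊆ E(M), and let C be a circuit of M with |C ∩ T| even. Then C is also a circuit (in particular, a dependent set) of the element splitting matroid M'_T. -/

import Mathlib

open Set

variable {α : Type*}

/-- The rank of a set `X` in a matroid `M`: the maximum size of an independent subset of `X`. -/
noncomputable def mrank (M : Matroid α) (X : Set α) : ℕ :=
  sSup {n | ∃ I, M.Indep I ∧ I ⊆ X ∧ I.ncard = n}

/-- `(A, B)` is a `k`-separation of `M`: a partition of the ground set with both sides of
size at least `k` and `r(A) + r(B) - r(M) ≤ k - 1` (written additively). -/
def IsKSeparation (M : Matroid α) (k : ℕ) (A B : Set α) : Prop :=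
  A ∪ B = M.E ∧ Disjoint A B ∧ k ≤ A.ncard ∧ k ≤ B.ncard ∧
    mrank M A + mrank M B + 1 ≤ mrank M M.E + k

/-- `M` is `n`-connected if it has no `k`-separation for any `k < n`. -/
def NConnected (M : Matroid α) (n : ℕ) : Prop :=
  ∀ k A B, 1 ≤ k → k < n → ¬ IsKSeparation M k A B

/-- A circuit is a minimal dependent set. -/
def MCircuit (M : Matroid α) (C : Set α) : Prop := Minimal M.Dep C

/-- A cocircuit is a circuit of the dual matroid. -/
def MCocircuit (M : Matroid α) (C : Set α) : Prop := MCircuit M✶ C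

/-- A loop is a dependent singleton. -/
def MLoop (M : Matroid α) (e : α) : Prop := M.Dep {e}

/-- A coloop is a loop of the dual, i.e. an element lying in every base. -/
def MColoop (M : Matroid α) (e : α) : Prop := M✶.Dep {e}

/-- `M` is the vector matroid of the family of vectors `φ` over `GF(2)`:
a set is independent iff it lies in the ground set and the corresponding
vectors are linearly independent. -/
def IsRep {W : Type*} [AddCommGroup W] [Module (ZMod 2) W] (M : Matroid α) (φ : α → W) : Prop :=
  ∀ I : Set α, M.Indep I ↔ I ⊆ M.E ∧ LinearIndependent (ZMod 2) (I.restrict φ)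

open scoped Classical in
/-- The columns of the element splitting matrix `A'_T`: each original column gets an extra
coordinate (the new row), equal to `1` exactly on the columns labelled by `T`, and a new
column `a` which is `1` in the new row and `0` elsewhere. -/
noncomputable def splitRep {W : Type*} [AddCommGroup W] [Module (ZMod 2) W]
    (φ : α → W) (T : Set α) (a : α) : α → W × ZMod 2 :=
  fun x => if x = a then (0, 1) else (φ x, if x ∈ T then 1 else 0)

/-- `N` is the element splitting matroid `M'_T` of the binary matroid `M` (represented by `φ`)
with respect to `T`, with new element `a`. -/
def IsEleSplit {W : Type*} [AddCommGroup W] [Module (ZMod 2) W]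
    (M : Matroid α) (φ : α → W) (T : Set α) (a : α) (N : Matroid α) : Prop :=
  a ∉ M.E ∧ N.E = insert a M.E ∧ IsRep N (splitRep φ T a)

/-- `M` is the contraction `N / a` of the single element `a` from `N`. -/
def ContractElemEq (N : Matroid α) (a : α) (M : Matroid α) : Prop :=
  M.E = N.E \ {a} ∧ ∀ I : Set α,
    M.Indep I ↔ a ∉ I ∧
      ((N.Indep {a} ∧ N.Indep (insert a I)) ∨ (¬ N.Indep {a} ∧ N.Indep I))

/-- A circuit C of M with |C ∩ T| even is also a circuit of the element splitting
matroid M'_T. -/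
theorem circuit_even_inter_is_circuit_eleSplit {α W : Type*}
    [AddCommGroup W] [Module (ZMod 2) W]
    (M N : Matroid α) (φ : α → W) (hM : IsRep M φ) (T : Set α) (hT : T ⊆ M.E)
    (a : α) (hN : IsEleSplit M φ T a N)
    (C : Set α) (hC : MCircuit M C) (heven : Even ((C ∩ T).ncard)) :
    MCircuit N C := by
  classical
  obtain ⟨haE, hNE, hNrep⟩ := hN
  have hCE : C ⊆ M.E := hC.1.subset_ground
  have hCNE : C ⊆ N.E := hNE ▸ hCE.trans (subset_insert a M.E)
  -- projection lemma
  have hproj : ∀ D : Set α, D ⊆ M.E → M.Indep D → N.Indep D := by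
    intro D hDE hDind
    have hli : LinearIndependent (ZMod 2) (D.restrict φ) := ((hM D).mp hDind).2
    refine (hNrep D).mpr ⟨hNE ▸ hDE.trans (subset_insert a M.E), ?_⟩
    have heq : D.restrict φ =
        (LinearMap.fst (ZMod 2) W (ZMod 2)) ∘ (D.restrict (splitRep φ T a)) := by
      funext x
      have hxa : (x : α) ≠ a := fun h => haE (h ▸ hDE x.2)
      simp [splitRep, hxa, Set.restrict]
    exact LinearIndependent.of_comp _ (heq ▸ hli)
  -- find the dependency l for C
  have hnotindM : ¬ M.Indep C := hC.1.not_indep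
  have hnotli : ¬ LinearIndependent (ZMod 2) (C.restrict φ) :=
    fun h => hnotindM ((hM C).mpr ⟨hCE, h⟩)
  rw [Set.restrict, Set.domRestrict_eq, linearIndependent_comp_subtype_iff, linearIndepOn_iff] at hnotli
  push_neg at hnotli
  obtain ⟨l, hlsupp, hl0, hlne⟩ := hnotli
  -- the support of l is a dependent subset of C, hence equals C
  have hsC : (↑l.support : Set α) ⊆ C := hlsupp
  have hsdep : M.Dep (↑l.support : Set α) := by
    rw [Matroid.Dep]
    refine ⟨fun hind => ?_, hsC.trans hCE⟩
    have hli : LinearIndependent (ZMod 2) (((↑l.support : Set α)).restrict φ) :=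
      ((hM _).mp hind).2
    rw [Set.restrict, Set.domRestrict_eq, linearIndependent_comp_subtype_iff, linearIndepOn_iff] at hli
    exact hlne (hli l (by simp [Finsupp.mem_supported]) hl0)
  have hCs : C = (↑l.support : Set α) := (hC.2 hsdep hsC).antisymm hsC
  -- coefficients are all 1
  have hcoef : ∀ x ∈ l.support, l x = 1 := by
    intro x hx
    have : l x ≠ 0 := Finsupp.mem_support_iff.mp hx
    revert this; generalize l x = b; revert b; decide
  have hsum : ∑ x ∈ l.support, φ x = 0 := by
    rw [Finsupp.linearCombination_apply, Finsupp.sum] at hl0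
    rw [← hl0]
    exact Finset.sum_congr rfl fun x hx => by rw [hcoef x hx, one_smul]
  -- C is dependent in N
  have hdepN : N.Dep C := by
    rw [Matroid.Dep]
    refine ⟨fun hind => ?_, hCNE⟩
    have hli : LinearIndependent (ZMod 2) (C.restrict (splitRep φ T a)) :=
      ((hNrep C).mp hind).2
    rw [Set.restrict, Set.domRestrict_eq, linearIndependent_comp_subtype_iff, linearIndepOn_iff] at hli
    refine hlne (hli l hlsupp ?_)
    rw [Finsupp.linearCombination_apply, Finsupp.sum]
    have hkey : ∀ x ∈ l.support, l x • splitRep φ T a x =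
        (φ x, if x ∈ T then 1 else 0) := by
      intro x hx
      have hxa : x ≠ a := fun h => haE (h ▸ hCE (hsC hx))
      rw [hcoef x hx, one_smul, splitRep, if_neg hxa]
    rw [Finset.sum_congr rfl hkey, Prod.ext_iff]
    constructor
    · rw [Prod.fst_sum]
      simpa using hsum
    · rw [Prod.snd_sum]
      simp only [Finset.sum_boole, Prod.snd_zero]
      have hcard : (C ∩ T).ncard = (l.support.filter (· ∈ T)).card := by
        rw [hCs, ← Set.ncard_coe_finset]
        congr 1
        ext x; simp [and_comm]
      rw [hcard] at heven
      rw [ZMod.natCast_eq_zero_iff]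
      exact heven.two_dvd
  -- minimality
  refine ⟨hdepN, fun D hD hDC => ?_⟩
  have hDdepM : M.Dep D := by
    rw [Matroid.Dep]
    refine ⟨fun hind => hD.not_indep (hproj D (hDC.trans hCE) hind), hDC.trans hCE⟩
  exact hC.2 hDdepM hDC
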